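/- Fix p > 0, c > 0, η > 1/2, M > 0. Define the absolute loss ratio improvement h(ρ) = LR(ρ) − LR((1+p)ρ) for ρ ∈ (0, 1/(1+p)), where LR(ρ) = (1/M)·((1 + ρ²c)/(ρ²(1+c)))^{(2η−1)/2}. Then h is strictly decreasing in ρ. -/

import Mathlib

/-- Derivative of the core loss-ratio function `ρ ↦ ((1+ρ²c)/(ρ²(1+c)))^E` at `x > 0`. -/
lemma core_hasDerivAt (c E : ℝ) (hc : 0 < c) {x : ℝ} (hx : 0 < x) :
    HasDerivAt (fun ρ : ℝ => ((1 + ρ ^ 2 * c) / (ρ ^ 2 * (1 + c))) ^ E)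
      (E * ((1 + x ^ 2 * c) / (x ^ 2 * (1 + c))) ^ (E - 1) * (-2 / (x ^ 3 * (1 + c)))) x := by
  have hc1 : (0:ℝ) < 1 + c := by linarith
  have hx2 : (0:ℝ) < x ^ 2 := pow_pos hx 2
  have hD : x ^ 2 * (1 + c) ≠ 0 := (mul_pos hx2 hc1).ne'
  have hA : 0 < (1 + x ^ 2 * c) / (x ^ 2 * (1 + c)) :=
    div_pos (by positivity) (mul_pos hx2 hc1)
  have h1 : HasDerivAt (fun ρ : ℝ => 1 + ρ ^ 2 * c) (2 * x * c) x := by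
    have := ((hasDerivAt_pow 2 x).mul_const c).const_add 1
    simpa using this
  have h2 : HasDerivAt (fun ρ : ℝ => ρ ^ 2 * (1 + c)) (2 * x * (1 + c)) x := by
    have := (hasDerivAt_pow 2 x).mul_const (1 + c)
    simpa using this
  have hB : HasDerivAt (fun ρ : ℝ => (1 + ρ ^ 2 * c) / (ρ ^ 2 * (1 + c)))
      (-2 / (x ^ 3 * (1 + c))) x := by
    have hdiv := h1.div h2 hD
    refine hdiv.congr_deriv ?_
    rw [div_eq_div_iff (pow_ne_zero 2 hD) (mul_pos (pow_pos hx 3) hc1).ne']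
    ring
  have := hB.rpow_const (p := E) (Or.inl hA.ne')
  convert this using 1
  ring

/-- Key algebraic inequality: if `Aq < A < k·Aq` with everything positive and `E > 0`,
then `Aq^(E-1)/k < A^(E-1)`. -/
lemma key_ineq (A Aq E k : ℝ) (hAq : 0 < Aq) (hE : 0 < E) (hk : 0 < k)
    (h1 : Aq < A) (h2 : A < k * Aq) : Aq ^ (E - 1) / k < A ^ (E - 1) := by
  have hA : 0 < A := lt_trans hAq h1
  have hAE : Aq ^ E < A ^ E := Real.rpow_lt_rpow hAq.le h1 hE
  have hQ : 0 < Aq ^ E := Real.rpow_pos_of_pos hAq E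
  rw [Real.rpow_sub hAq, Real.rpow_sub hA, Real.rpow_one, Real.rpow_one, div_div,
    div_lt_div_iff₀ (by positivity) hA]
  nlinarith [mul_lt_mul'' hAE h2 hQ.le hA.le]

/-- Diminishing marginal returns (absolute version): for a fixed fractional improvement
`p > 0` in correlation, the absolute loss ratio improvement `h(ρ) = LR(ρ) − LR((1+p)ρ)`
is strictly decreasing in `ρ` on `(0, 1/(1+p))`, where
`LR(ρ) = (1/M)·((1 + ρ²c)/(ρ²(1+c)))^{(2η−1)/2}`. -/
theorem absolute_improvement_strictAntiOn (p c η M : ℝ) (hp : 0 < p) (hc : 0 < c)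
    (hη : 1 / 2 < η) (hM : 0 < M)
    (LR : ℝ → ℝ)
    (hLR : LR = fun ρ => (1 / M) * ((1 + ρ ^ 2 * c) / (ρ ^ 2 * (1 + c))) ^ ((2 * η - 1) / 2)) :
    StrictAntiOn (fun ρ : ℝ => LR ρ - LR ((1 + p) * ρ)) (Set.Ioo 0 (1 / (1 + p))) := by
  subst hLR
  have hp1 : (0:ℝ) < 1 + p := by linarith
  have hc1 : (0:ℝ) < 1 + c := by linarith
  set E : ℝ := (2 * η - 1) / 2 with hEdef
  have hE : 0 < E := by rw [hEdef]; linarith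
  -- the function and its derivative
  have HD : ∀ x : ℝ, 0 < x → HasDerivAt
      (fun ρ : ℝ => (1 / M) * ((1 + ρ ^ 2 * c) / (ρ ^ 2 * (1 + c))) ^ E
        - (1 / M) * ((1 + ((1 + p) * ρ) ^ 2 * c) / (((1 + p) * ρ) ^ 2 * (1 + c))) ^ E)
      ((1 / M) * (E * ((1 + x ^ 2 * c) / (x ^ 2 * (1 + c))) ^ (E - 1) * (-2 / (x ^ 3 * (1 + c))))
        - (1 / M) * (E * ((1 + ((1 + p) * x) ^ 2 * c) / (((1 + p) * x) ^ 2 * (1 + c))) ^ (E - 1)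
            * (-2 / (((1 + p) * x) ^ 3 * (1 + c))) * (1 + p))) x := by
    intro x hx
    have hqx : 0 < (1 + p) * x := mul_pos hp1 hx
    have d1 := (core_hasDerivAt c E hc hx).const_mul (1 / M)
    have dlin : HasDerivAt (fun ρ : ℝ => (1 + p) * ρ) (1 + p) x := by
      simpa using (hasDerivAt_id x).const_mul (1 + p)
    have d2 := ((core_hasDerivAt c E hc hqx).comp x dlin).const_mul (1 / M)
    exact d1.sub d2
  apply strictAntiOn_of_deriv_neg (convex_Ioo _ _)
  · intro x hx
    exact (HD x hx.1).continuousAt.continuousWithinAt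
  · rw [interior_Ioo]
    intro x hx
    have hx0 : 0 < x := hx.1
    have hqx : 0 < (1 + p) * x := mul_pos hp1 hx0
    rw [(HD x hx0).deriv]
    set A : ℝ := (1 + x ^ 2 * c) / (x ^ 2 * (1 + c)) with hAdef
    set Aq : ℝ := (1 + ((1 + p) * x) ^ 2 * c) / (((1 + p) * x) ^ 2 * (1 + c)) with hAqdef
    have hx2 : (0:ℝ) < x ^ 2 := pow_pos hx0 2
    have hqx2 : (0:ℝ) < ((1 + p) * x) ^ 2 := pow_pos hqx 2
    have hA : 0 < A := div_pos (by positivity) (mul_pos hx2 hc1)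
    have hAq : 0 < Aq := div_pos (by positivity) (mul_pos hqx2 hc1)
    have h1 : Aq < A := by
      rw [hAdef, hAqdef, div_lt_div_iff₀ (mul_pos hqx2 hc1) (mul_pos hx2 hc1)]
      nlinarith [mul_pos (mul_pos hx2 hc1) (show (0:ℝ) < 2 * p + p ^ 2 by nlinarith)]
    have h2 : A < (1 + p) ^ 2 * Aq := by
      rw [hAdef, hAqdef, ← mul_div_assoc,
        div_lt_div_iff₀ (mul_pos hx2 hc1) (mul_pos hqx2 hc1)]
      nlinarith [mul_pos (mul_pos (mul_pos (mul_pos (pow_pos hp1 2) (pow_pos hx2 2)) hc) hc1)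
        (show (0:ℝ) < 2 * p + p ^ 2 by nlinarith)]
    have hk : Aq ^ (E - 1) / (1 + p) ^ 2 < A ^ (E - 1) :=
      key_ineq A Aq E ((1 + p) ^ 2) hAq hE (by positivity) h1 h2
    have hP : 0 < A ^ (E - 1) := Real.rpow_pos_of_pos hA _
    have hQ : 0 < Aq ^ (E - 1) := Real.rpow_pos_of_pos hAq _
    have heq : (1 / M) * (E * A ^ (E - 1) * (-2 / (x ^ 3 * (1 + c))))
        - (1 / M) * (E * Aq ^ (E - 1) * (-2 / (((1 + p) * x) ^ 3 * (1 + c))) * (1 + p))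
        = (2 * E / (M * (1 + c) * x ^ 3)) * (Aq ^ (E - 1) / (1 + p) ^ 2 - A ^ (E - 1)) := by
      field_simp
      ring
    rw [heq]
    exact mul_neg_of_pos_of_neg
      (div_pos (by linarith) (by positivity)) (by linarith)
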